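/- arXiv:1005.4390 — 3 statements merged into one kernel-verified Lean document; each statement's English description precedes it below -/
import Mathlib

section
/- Let Y = Σ_{α∈I} X_α be a finite sum of nontrivial exchangeable Bernoulli random variables, and for a fixed α let (X_β^α)_{β∈I} have the joint distribution of (X_β)_{β∈I} conditioned on X_α = 1. Then Y^α = Σ_{β∈I} X_β^α has the Y-size biased distribution, i.e., E[Y f(Y)] = E[Y] · E[f(Y^α)] for all bounded functions f. -/
open MeasureTheory ProbabilityTheory

/-- Lemma 1.1: size biasing a sum of exchangeable Bernoulli indicators by
conditioning on one of them being one. -/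
theorem sum_exchangeable_bernoulli_size_bias
    {Ω Ω' : Type*} [MeasureSpace Ω] [MeasureSpace Ω']
    [IsProbabilityMeasure (ℙ : Measure Ω)] [IsProbabilityMeasure (ℙ : Measure Ω')]
    {ι : Type*} [Fintype ι] [MeasurableSpace ι]
    (X : ι → Ω → ℝ) (hXmeas : ∀ i, Measurable (X i))
    (hBern : ∀ i ω, X i ω = 0 ∨ X i ω = 1)
    (hexch : ∀ σ : Equiv.Perm ι,
      Measure.map (fun ω (i : ι) => X (σ i) ω) (ℙ : Measure Ω)
        = Measure.map (fun ω (i : ι) => X i ω) (ℙ : Measure Ω))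
    (α : ι) (hnontriv : 0 < (ℙ : Measure Ω) {ω | X α ω = 1})
    (Xα : ι → Ω' → ℝ) (hXαmeas : ∀ i, Measurable (Xα i))
    (hcond : Measure.map (fun ω (i : ι) => Xα i ω) (ℙ : Measure Ω')
        = Measure.map (fun ω (i : ι) => X i ω)
            ((ℙ : Measure Ω)[|{ω | X α ω = 1}]))
    (f : ℝ → ℝ) (hf : Measurable f) (hfbdd : ∃ C, ∀ x, |f x| ≤ C) :
    ∫ ω, (∑ i, X i ω) * f (∑ i, X i ω) ∂(ℙ : Measure Ω)
      = (∫ ω, (∑ i, X i ω) ∂(ℙ : Measure Ω))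
          * ∫ ω, f (∑ i, Xα i ω) ∂(ℙ : Measure Ω') := by
  classical
  obtain ⟨C, hC⟩ := hfbdd
  set s : Set Ω := {ω | X α ω = 1} with hs
  have hsm : MeasurableSet s := (hXmeas α) (measurableSet_singleton 1)
  have hsum_meas : Measurable (fun ω => ∑ i, X i ω) :=
    Finset.measurable_sum _ fun i _ => hXmeas i
  have hpisum : Measurable (fun x : ι → ℝ => ∑ j, x j) :=
    Finset.measurable_sum _ fun j _ => measurable_pi_apply j
  have hXbd : ∀ i ω, |X i ω| ≤ 1 := by
    intro i ω; rcases hBern i ω with h | h <;> simp [h]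
  have hm2 : Measurable (fun ω (j : ι) => X j ω) :=
    measurable_pi_lambda _ fun j => hXmeas j
  -- key exchangeability consequence
  have key : ∀ (g : (ι → ℝ) → ℝ), Measurable g → ∀ i,
      ∫ ω, g (fun j => X j ω) ∂(ℙ : Measure Ω)
        = ∫ ω, g ((fun j => X j ω) ∘ (Equiv.swap i α)) ∂(ℙ : Measure Ω) := by
    intro g hg i
    have hm1 : Measurable (fun ω (j : ι) => X ((Equiv.swap i α) j) ω) :=
      measurable_pi_lambda _ fun j => hXmeas _
    have h1 : ∫ x, g x ∂(Measure.map (fun ω (j : ι) => X ((Equiv.swap i α) j) ω) ℙ)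
        = ∫ x, g x ∂(Measure.map (fun ω (j : ι) => X j ω) ℙ) := by
      rw [hexch (Equiv.swap i α)]
    rw [integral_map hm1.aemeasurable hg.aestronglyMeasurable,
      integral_map hm2.aemeasurable hg.aestronglyMeasurable] at h1
    exact h1.symm
  have key1 : ∀ i, ∫ ω, X i ω * f (∑ j, X j ω) ∂(ℙ : Measure Ω)
      = ∫ ω, X α ω * f (∑ j, X j ω) ∂(ℙ : Measure Ω) := by
    intro i
    have hg : Measurable (fun x : ι → ℝ => x i * f (∑ j, x j)) :=
      (measurable_pi_apply i).mul (hf.comp hpisum)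
    have h := key _ hg i
    have hsumeq : ∀ ω : Ω, ∑ j, X ((Equiv.swap i α) j) ω = ∑ j, X j ω :=
      fun ω => Equiv.sum_comp (Equiv.swap i α) (fun j => X j ω)
    simpa [Function.comp, Equiv.swap_apply_left, hsumeq] using h
  have key2 : ∀ i, ∫ ω, X i ω ∂(ℙ : Measure Ω) = ∫ ω, X α ω ∂(ℙ : Measure Ω) := by
    intro i
    have h := key (fun x => x i) (measurable_pi_apply i) i
    simpa [Function.comp, Equiv.swap_apply_left] using h
  -- integrability
  have hint1 : ∀ i, Integrable (fun ω => X i ω * f (∑ j, X j ω)) (ℙ : Measure Ω) := by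
    intro i
    refine ⟨((hXmeas i).mul (hf.comp hsum_meas)).aestronglyMeasurable,
      HasFiniteIntegral.of_bounded (C := C) (ae_of_all _ fun ω => ?_)⟩
    have := hC (∑ j, X j ω)
    have h0 : (0:ℝ) ≤ C := le_trans (abs_nonneg _) (hC 0)
    calc ‖X i ω * f (∑ j, X j ω)‖ = |X i ω| * |f (∑ j, X j ω)| := abs_mul _ _
      _ ≤ 1 * C := mul_le_mul (hXbd i ω) this (abs_nonneg _) zero_le_one
      _ = C := one_mul C
  -- indicator identity
  have hind : ∀ ω, X α ω = s.indicator (fun _ => (1:ℝ)) ω := by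
    intro ω
    rcases hBern α ω with h | h
    · have : ω ∉ s := by simp [hs, h]
      simp [h, this]
    · have : ω ∈ s := by simpa [hs] using h
      simp [h, this]
  -- LHS computation
  have hLHS : ∫ ω, (∑ i, X i ω) * f (∑ i, X i ω) ∂(ℙ : Measure Ω)
      = (Fintype.card ι : ℝ) * ∫ ω, X α ω * f (∑ j, X j ω) ∂(ℙ : Measure Ω) := by
    have : ∀ ω, (∑ i, X i ω) * f (∑ i, X i ω) = ∑ i, X i ω * f (∑ j, X j ω) := by
      intro ω; rw [Finset.sum_mul]
    rw [show (fun ω => (∑ i, X i ω) * f (∑ i, X i ω))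
        = fun ω => ∑ i, X i ω * f (∑ j, X j ω) from funext this,
      integral_finset_sum _ fun i _ => hint1 i]
    rw [Finset.sum_congr rfl fun i _ => key1 i, Finset.sum_const, Finset.card_univ,
      nsmul_eq_mul]
  have hEY : ∫ ω, (∑ i, X i ω) ∂(ℙ : Measure Ω)
      = (Fintype.card ι : ℝ) * (ℙ s).toReal := by
    rw [integral_finset_sum _ fun i _ => ?_]
    · rw [Finset.sum_congr rfl fun i _ => key2 i, Finset.sum_const, Finset.card_univ,
        nsmul_eq_mul]
      congr 1
      rw [show X α = fun ω => s.indicator (fun _ => (1:ℝ)) ω from funext hind]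
      simp [integral_indicator hsm]
      rfl
    · exact ⟨(hXmeas i).aestronglyMeasurable,
        HasFiniteIntegral.of_bounded (C := 1) (ae_of_all _ fun ω => hXbd i ω)⟩
  -- X α * f = indicator
  have hXf : ∀ ω, X α ω * f (∑ j, X j ω)
      = s.indicator (fun ω => f (∑ j, X j ω)) ω := by
    intro ω
    rcases hBern α ω with h | h
    · have hω : ω ∉ s := by simp [hs, h]
      simp [h, hω]
    · have hω : ω ∈ s := by simpa [hs] using h
      simp [h, hω]
  have hXαf : ∫ ω, X α ω * f (∑ j, X j ω) ∂(ℙ : Measure Ω)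
      = ∫ ω in s, f (∑ j, X j ω) ∂(ℙ : Measure Ω) := by
    rw [show (fun ω => X α ω * f (∑ j, X j ω))
        = fun ω => s.indicator (fun ω => f (∑ j, X j ω)) ω from funext hXf,
      integral_indicator hsm]
  -- conditional measure
  have hcondint : ∫ ω, f (∑ j, X j ω) ∂((ℙ : Measure Ω)[|s])
      = ((ℙ : Measure Ω) s).toReal⁻¹ * ∫ ω in s, f (∑ j, X j ω) ∂(ℙ : Measure Ω) := by
    rw [ProbabilityTheory.cond, integral_smul_measure, ENNReal.toReal_inv, smul_eq_mul]
  -- RHS transfer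
  have hRHS : ∫ ω, f (∑ i, Xα i ω) ∂(ℙ : Measure Ω')
      = ∫ ω, f (∑ j, X j ω) ∂((ℙ : Measure Ω)[|s]) := by
    have hmα : Measurable (fun ω (j : ι) => Xα j ω) :=
      measurable_pi_lambda _ fun j => hXαmeas j
    have hg : Measurable (fun x : ι → ℝ => f (∑ j, x j)) := hf.comp hpisum
    calc ∫ ω, f (∑ i, Xα i ω) ∂(ℙ : Measure Ω')
        = ∫ x, f (∑ j, x j) ∂(Measure.map (fun ω (i : ι) => Xα i ω) (ℙ : Measure Ω')) :=
          (integral_map hmα.aemeasurable hg.aestronglyMeasurable).symm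
      _ = ∫ x, f (∑ j, x j) ∂(Measure.map (fun ω (i : ι) => X i ω) ((ℙ : Measure Ω)[|s])) := by
          rw [hcond]
      _ = ∫ ω, f (∑ j, X j ω) ∂((ℙ : Measure Ω)[|s]) :=
          integral_map hm2.aemeasurable hg.aestronglyMeasurable
  have hp : ((ℙ : Measure Ω) s).toReal ≠ 0 :=
    (ENNReal.toReal_pos hnontriv.ne' (measure_ne_top _ _)).ne'
  rw [hLHS, hEY, hRHS, hcondint, hXαf]
  field_simp
end

section
/- Suppose for some n₁ ∈ ℕ the nonnegative reals f, {p_{n,l}}_{n ≥ n₁, 0 ≤ l ≤ n}, and {a_n}_{n ≥ 0} satisfy a_n ≤ Σ_{l=0}^n a_{n-l} p_{n,l} + f for all n ≥ n₁, and τ := sup_{n ≥ n₁} Σ_{l=0}^n p_{n,l} satisfies τ ∈ (0,1). Then sup_{n ≥ 0} a_n < ∞. -/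
/-- Lemma 3.1: a recursive inequality with total mass of the weights bounded by
`τ < 1` implies the sequence is bounded. -/
theorem bounded_of_recursive_inequality
    (n₁ : ℕ) (f τ : ℝ) (p : ℕ → ℕ → ℝ) (a : ℕ → ℝ)
    (hf : 0 ≤ f) (hp : ∀ n l, 0 ≤ p n l) (ha : ∀ n, 0 ≤ a n)
    (hrec : ∀ n, n₁ ≤ n →
      a n ≤ (∑ l ∈ Finset.range (n + 1), a (n - l) * p n l) + f)
    (hτsum : ∀ n, n₁ ≤ n → (∑ l ∈ Finset.range (n + 1), p n l) ≤ τ)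
    (hτ0 : 0 < τ) (hτ1 : τ < 1) :
    BddAbove (Set.range a) := by
  have hne : (Finset.range (n₁ + 1)).Nonempty := ⟨0, by simp⟩
  set A := (Finset.range (n₁ + 1)).sup' hne a with hA
  set M := max A (f / (1 - τ)) with hM
  have h1τ : 0 < 1 - τ := by linarith
  have hMf : τ * M + f ≤ M := by
    have h1 : f / (1 - τ) ≤ M := le_max_right _ _
    have h2 : f ≤ M * (1 - τ) := by
      rw [div_le_iff₀ h1τ] at h1; linarith
    nlinarith
  have key : ∀ n, a n ≤ M := by
    intro n
    induction n using Nat.strong_induction_on with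
    | _ n IH =>
      by_cases hn : n ≤ n₁
      · exact le_trans (Finset.le_sup' a (Finset.mem_range.mpr (Nat.lt_succ_of_le hn)))
          (le_max_left _ _)
      · push_neg at hn
        have hn' : n₁ ≤ n := hn.le
        have hr := hrec n hn'
        have hsplit : ∑ l ∈ Finset.range (n + 1), a (n - l) * p n l
            = (∑ l ∈ Finset.range n, a (n - (l + 1)) * p n (l + 1)) + a n * p n 0 := by
          simpa using Finset.sum_range_succ' (fun l => a (n - l) * p n l) n
        have hbound : ∑ l ∈ Finset.range n, a (n - (l + 1)) * p n (l + 1)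
            ≤ M * ∑ l ∈ Finset.range n, p n (l + 1) := by
          rw [Finset.mul_sum]
          refine Finset.sum_le_sum fun l hl => ?_
          have hlt : n - (l + 1) < n := Nat.sub_lt (by omega) (by omega)
          exact mul_le_mul_of_nonneg_right (IH _ hlt) (hp n (l + 1))
        have hpsplit : ∑ l ∈ Finset.range (n + 1), p n l
            = (∑ l ∈ Finset.range n, p n (l + 1)) + p n 0 := by
          simpa using Finset.sum_range_succ' (p n) n
        have hps : (∑ l ∈ Finset.range n, p n (l + 1)) + p n 0 ≤ τ := by
          rw [← hpsplit]; exact hτsum n hn'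
        have hp0 : p n 0 ≤ τ := by
          have hsum_nn : ∀ l ∈ Finset.range n, 0 ≤ p n (l + 1) := fun l _ => hp n (l + 1)
          have := Finset.sum_nonneg hsum_nn
          linarith
        have hp0lt : p n 0 < 1 := lt_of_le_of_lt hp0 hτ1
        have hMnn : 0 ≤ M := le_trans (div_nonneg hf h1τ.le) (le_max_right _ _)
        have hstep : a n ≤ M * (τ - p n 0) + a n * p n 0 + f := by
          have : M * (∑ l ∈ Finset.range n, p n (l + 1)) ≤ M * (τ - p n 0) := by
            apply mul_le_mul_of_nonneg_left (by linarith) hMnn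
          rw [hsplit] at hr
          linarith
        have h3 : a n * (1 - p n 0) ≤ M * (1 - p n 0) := by nlinarith
        have h4 : 0 < 1 - p n 0 := by linarith
        exact le_of_mul_le_mul_right (by linarith [h3]) h4
  exact ⟨M, by rintro x ⟨n, rfl⟩; exact key n⟩
end

section
/- Let G_n be an Erdős–Rényi graph on vertex set {1,...,n} with independent edge indicators of common success probability p, let I be a uniformly chosen vertex independent of the graph, and let H_n be the graph obtained by removing I and all its incident edges (relabeling remaining vertices preserving order). Then conditionally on (I, deg(I)), H_n is distributed as an Erdős–Rényi graph on n-1 vertices with edge probability p; in particular H_n is independent of (I, deg(I)). -/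
open MeasureTheory

/-- Index set for potential edges of a graph on `Fin n`: ordered pairs `u < v`. -/
abbrev EdgeIdx (n : ℕ) := {e : Fin n × Fin n // e.1 < e.2}

/-- Adjacency relation determined by edge indicators `ω`. -/
def adjOf {n : ℕ} (ω : EdgeIdx n → Bool) (u v : Fin n) : Bool :=
  if h : u < v then ω ⟨(u, v), h⟩ else if h : v < u then ω ⟨(v, u), h⟩ else false

/-- Degree of vertex `v` in the graph with edge indicators `ω`. -/
def degOf {n : ℕ} (ω : EdgeIdx n → Bool) (v : Fin n) : ℕ :=
  (Finset.univ.filter fun w => adjOf ω v w = true).card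

/-- Number of vertices of degree `d` in the graph with edge indicators `ω`. -/
def degCount {n : ℕ} (d : ℕ) (ω : EdgeIdx n → Bool) : ℕ :=
  (Finset.univ.filter fun v => degOf ω v = d).card

/-- The Erdős–Rényi measure: independent `Bernoulli(p)` edge indicators. -/
noncomputable def gnp (n : ℕ) (p : ENNReal) (hp : p ≤ 1) :
    Measure (EdgeIdx n → Bool) :=
  Measure.pi fun _ => (PMF.bernoulli p.toNNReal (by simpa using ENNReal.toNNReal_mono ENNReal.one_ne_top hp)).toMeasure

/-- The graph on `n` vertices obtained by removing vertex `i` (and its incident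
edges) from a graph on `n+1` vertices, relabeling the remaining vertices so as
to preserve their relative order. -/
def removeVertex {n : ℕ} (i : Fin (n + 1)) (ω : EdgeIdx (n + 1) → Bool) :
    EdgeIdx n → Bool :=
  fun e => adjOf ω (i.succAbove e.1.1) (i.succAbove e.1.2)

namespace RVAux

lemma measurableSet_all {α : Type*} [MeasurableSpace α] [Countable α]
    [MeasurableSingletonClass α] (s : Set α) : MeasurableSet s :=
  (Set.to_countable s).measurableSet

variable {n : ℕ}

/-- The edges of `Fin (n+1)` indexed by edges among the non-`j` vertices plus
the `n` edges incident to `j`. -/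
def eFun (j : Fin (n + 1)) : EdgeIdx n ⊕ Fin n → EdgeIdx (n + 1)
  | .inl e => ⟨(j.succAbove e.1.1, j.succAbove e.1.2), Fin.succAbove_lt_succAbove_iff.mpr e.2⟩
  | .inr k =>
      if h : j < j.succAbove k then ⟨(j, j.succAbove k), h⟩
      else ⟨(j.succAbove k, j), lt_of_le_of_ne (not_lt.mp h) (j.succAbove_ne k)⟩

lemma eFun_injective (j : Fin (n + 1)) : Function.Injective (eFun j) := by
  have hinj : Function.Injective j.succAbove := Fin.succAbove_right_injective
  rintro (a | a) (b | b) h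
  · simp only [eFun, Subtype.mk.injEq, Prod.mk.injEq] at h
    exact congrArg Sum.inl (Subtype.ext (Prod.ext (hinj h.1) (hinj h.2)))
  · exfalso
    simp only [eFun] at h
    split_ifs at h with hb <;> simp only [Subtype.mk.injEq, Prod.mk.injEq] at h
    · exact (j.succAbove_ne a.1.1) h.1
    · exact (j.succAbove_ne a.1.2) h.2
  · exfalso
    simp only [eFun] at h
    split_ifs at h with ha <;> simp only [Subtype.mk.injEq, Prod.mk.injEq] at h
    · exact (j.succAbove_ne b.1.1) h.1.symm
    · exact (j.succAbove_ne b.1.2) h.2.symm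
  · simp only [eFun] at h
    split_ifs at h with ha hb hb <;> simp only [Subtype.mk.injEq, Prod.mk.injEq] at h
    · exact congrArg Sum.inr (hinj h.2)
    · exact absurd h.1.symm (j.succAbove_ne b)
    · exact absurd h.1 (j.succAbove_ne a)
    · exact congrArg Sum.inr (hinj h.1)

lemma eFun_surjective (j : Fin (n + 1)) : Function.Surjective (eFun j) := by
  rintro ⟨⟨u, v⟩, huv⟩
  rcases eq_or_ne u j with rfl | hu
  · have hv : v ≠ u := (ne_of_gt huv)
    obtain ⟨k, hk⟩ := Fin.exists_succAbove_eq hv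
    refine ⟨.inr k, ?_⟩
    have hlt : u < u.succAbove k := by rw [hk]; exact huv
    simp only [eFun, dif_pos hlt]
    exact Subtype.ext (by simp [hk])
  · rcases eq_or_ne v j with rfl | hv
    · obtain ⟨k, hk⟩ := Fin.exists_succAbove_eq hu
      refine ⟨.inr k, ?_⟩
      have hlt : ¬ v < v.succAbove k := by rw [hk]; exact not_lt.mpr huv.le
      simp only [eFun, dif_neg hlt]
      exact Subtype.ext (by simp [hk])
    · obtain ⟨a, ha⟩ := Fin.exists_succAbove_eq hu
      obtain ⟨b, hb⟩ := Fin.exists_succAbove_eq hv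
      have hab : a < b := Fin.succAbove_lt_succAbove_iff.mp (by rw [ha, hb]; exact huv)
      exact ⟨.inl ⟨(a, b), hab⟩, Subtype.ext (by simp [eFun, ha, hb])⟩

/-- The bijection between edge indices. -/
noncomputable def eEquiv (j : Fin (n + 1)) : (EdgeIdx n ⊕ Fin n) ≃ EdgeIdx (n + 1) :=
  Equiv.ofBijective (eFun j) ⟨eFun_injective j, eFun_surjective j⟩

/-- The induced measurable bijection on indicator configurations. -/
noncomputable def TEquiv (j : Fin (n + 1)) :
    ((EdgeIdx n → Bool) × (Fin n → Bool)) ≃ᵐ (EdgeIdx (n + 1) → Bool) :=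
  (MeasurableEquiv.sumPiEquivProdPi (fun _ : EdgeIdx n ⊕ Fin n => Bool)).symm.trans
    (MeasurableEquiv.piCongrLeft (fun _ : EdgeIdx (n + 1) => Bool) (eEquiv j))

lemma TEquiv_inl (j : Fin (n + 1)) (η : EdgeIdx n → Bool) (χ : Fin n → Bool) (e : EdgeIdx n) :
    TEquiv j (η, χ) (eFun j (.inl e)) = η e := by
  show (MeasurableEquiv.piCongrLeft (fun _ : EdgeIdx (n + 1) => Bool) (eEquiv j))
      ((MeasurableEquiv.sumPiEquivProdPi (fun _ : EdgeIdx n ⊕ Fin n => Bool)).symm (η, χ))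
      (eFun j (.inl e)) = η e
  rw [MeasurableEquiv.coe_piCongrLeft, MeasurableEquiv.coe_sumPiEquivProdPi_symm]
  exact Equiv.piCongrLeft_sumInl (fun _ => Bool) (eEquiv j) η χ e

lemma TEquiv_inr (j : Fin (n + 1)) (η : EdgeIdx n → Bool) (χ : Fin n → Bool) (k : Fin n) :
    TEquiv j (η, χ) (eFun j (.inr k)) = χ k := by
  show (MeasurableEquiv.piCongrLeft (fun _ : EdgeIdx (n + 1) => Bool) (eEquiv j))
      ((MeasurableEquiv.sumPiEquivProdPi (fun _ : EdgeIdx n ⊕ Fin n => Bool)).symm (η, χ))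
      (eFun j (.inr k)) = χ k
  rw [MeasurableEquiv.coe_piCongrLeft, MeasurableEquiv.coe_sumPiEquivProdPi_symm]
  exact Equiv.piCongrLeft_sumInr (fun _ => Bool) (eEquiv j) η χ k

lemma removeVertex_TEquiv (j : Fin (n + 1)) (η : EdgeIdx n → Bool) (χ : Fin n → Bool) :
    removeVertex j (TEquiv j (η, χ)) = η := by
  funext e
  have h : j.succAbove e.1.1 < j.succAbove e.1.2 := Fin.succAbove_lt_succAbove_iff.mpr e.2
  show adjOf (TEquiv j (η, χ)) (j.succAbove e.1.1) (j.succAbove e.1.2) = η e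
  unfold adjOf
  rw [dif_pos h]
  exact TEquiv_inl j η χ e

lemma adjOf_self {m : ℕ} (ω : EdgeIdx m → Bool) (v : Fin m) : adjOf ω v v = false := by
  simp [adjOf]

lemma adjOf_TEquiv_inr (j : Fin (n + 1)) (η : EdgeIdx n → Bool) (χ : Fin n → Bool) (k : Fin n) :
    adjOf (TEquiv j (η, χ)) j (j.succAbove k) = χ k := by
  rcases (j.succAbove_ne k).lt_or_gt with h | h
  · have h2 : ¬ j < j.succAbove k := not_lt.mpr h.le
    have he : eFun j (.inr k) = ⟨(j.succAbove k, j), h⟩ := by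
      simp only [eFun]; rw [dif_neg h2]
    calc adjOf (TEquiv j (η, χ)) j (j.succAbove k)
        = TEquiv j (η, χ) ⟨(j.succAbove k, j), h⟩ := by
          unfold adjOf; rw [dif_neg h2, dif_pos h]
      _ = χ k := by rw [← he]; exact TEquiv_inr j η χ k
  · have he : eFun j (.inr k) = ⟨(j, j.succAbove k), h⟩ := by
      simp only [eFun]; rw [dif_pos h]
    calc adjOf (TEquiv j (η, χ)) j (j.succAbove k)
        = TEquiv j (η, χ) ⟨(j, j.succAbove k), h⟩ := by
          unfold adjOf; rw [dif_pos h]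
      _ = χ k := by rw [← he]; exact TEquiv_inr j η χ k

/-- Number of `true` coordinates. -/
def cnt (χ : Fin n → Bool) : ℕ := (Finset.univ.filter fun k => χ k = true).card

lemma degOf_TEquiv (j : Fin (n + 1)) (η : EdgeIdx n → Bool) (χ : Fin n → Bool) :
    degOf (TEquiv j (η, χ)) j = cnt χ := by
  unfold degOf cnt
  refine (Finset.card_bij (fun k _ => j.succAbove k) ?_ ?_ ?_).symm
  · intro k hk
    simp only [Finset.mem_filter, Finset.mem_univ, true_and] at hk ⊢
    rw [adjOf_TEquiv_inr]; exact hk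
  · intro a _ b _ h
    exact Fin.succAbove_right_injective h
  · intro w hw
    simp only [Finset.mem_filter, Finset.mem_univ, true_and] at hw
    have hwj : w ≠ j := by
      rintro rfl
      rw [adjOf_self] at hw
      exact Bool.false_ne_true hw
    obtain ⟨k, hk⟩ := Fin.exists_succAbove_eq hwj
    refine ⟨k, ?_, hk⟩
    simp only [Finset.mem_filter, Finset.mem_univ, true_and]
    rw [← adjOf_TEquiv_inr j η χ k, hk]
    exact hw

end RVAux

instance gnp_prob (n : ℕ) (p : ENNReal) (hp : p ≤ 1) : IsProbabilityMeasure (gnp n p hp) := by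
  unfold gnp; infer_instance

namespace RVAux

variable {n : ℕ} {p : ENNReal} {hp : p ≤ 1}

/-- The measure on the incident-edge indicators. -/
noncomputable def nu2 (n : ℕ) (p : ENNReal) (hp : p ≤ 1) : Measure (Fin n → Bool) :=
  Measure.pi fun _ => (PMF.bernoulli p.toNNReal (by simpa using ENNReal.toNNReal_mono ENNReal.one_ne_top hp)).toMeasure

instance (n : ℕ) (p : ENNReal) (hp : p ≤ 1) : IsProbabilityMeasure (nu2 n p hp) := by
  unfold nu2; infer_instance

lemma T_mp (j : Fin (n + 1)) :
    MeasurePreserving (TEquiv j) ((gnp n p hp).prod (nu2 n p hp)) (gnp (n + 1) p hp) := by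
  have h1 := measurePreserving_sumPiEquivProdPi_symm
    (X := fun _ : EdgeIdx n ⊕ Fin n => Bool) (fun _ => (PMF.bernoulli p.toNNReal (by simpa using ENNReal.toNNReal_mono ENNReal.one_ne_top hp)).toMeasure)
  have h2 := measurePreserving_piCongrLeft
    (μ := fun _ : EdgeIdx (n + 1) => (PMF.bernoulli p.toNNReal (by simpa using ENNReal.toNNReal_mono ENNReal.one_ne_top hp)).toMeasure) (eEquiv j)
  exact h2.comp h1

lemma gnp_apply_preimage (j : Fin (n + 1)) (S : Set (EdgeIdx (n + 1) → Bool)) :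
    gnp (n + 1) p hp S = ((gnp n p hp).prod (nu2 n p hp)) ((TEquiv j) ⁻¹' S) := by
  rw [← (T_mp (p := p) (hp := hp) j).map_eq, MeasurableEquiv.map_apply]

lemma K1 (j : Fin (n + 1)) (η : EdgeIdx n → Bool) :
    gnp (n + 1) p hp {ω | removeVertex j ω = η} = gnp n p hp {η} := by
  rw [gnp_apply_preimage j]
  have : (TEquiv j) ⁻¹' {ω | removeVertex j ω = η} = {η} ×ˢ (Set.univ : Set (Fin n → Bool)) := by
    ext ⟨η', χ⟩
    simp only [Set.mem_preimage, Set.mem_setOf_eq, removeVertex_TEquiv, Set.mem_prod,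
      Set.mem_singleton_iff, Set.mem_univ, and_true]
  rw [this, Measure.prod_prod, measure_univ, mul_one]

lemma K2 (j : Fin (n + 1)) (d : ℕ) :
    gnp (n + 1) p hp {ω | degOf ω j = d} = nu2 n p hp {χ | cnt χ = d} := by
  rw [gnp_apply_preimage j]
  have : (TEquiv j) ⁻¹' {ω | degOf ω j = d}
      = (Set.univ : Set (EdgeIdx n → Bool)) ×ˢ {χ | cnt χ = d} := by
    ext ⟨η', χ⟩
    simp [degOf_TEquiv]
  rw [this, Measure.prod_prod, measure_univ, one_mul]

lemma K12 (j : Fin (n + 1)) (η : EdgeIdx n → Bool) (d : ℕ) :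
    gnp (n + 1) p hp {ω | removeVertex j ω = η ∧ degOf ω j = d}
      = gnp n p hp {η} * nu2 n p hp {χ | cnt χ = d} := by
  rw [gnp_apply_preimage j]
  have : (TEquiv j) ⁻¹' {ω | removeVertex j ω = η ∧ degOf ω j = d}
      = {η} ×ˢ {χ | cnt χ = d} := by
    ext ⟨η', χ⟩
    simp only [Set.mem_preimage, Set.mem_setOf_eq, removeVertex_TEquiv, degOf_TEquiv,
      Set.mem_prod, Set.mem_singleton_iff]
  rw [this, Measure.prod_prod]

end RVAux

open RVAux in
/-- Removing a uniformly chosen vertex `I` from `G_{n+1}`: conditionally on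
`(I, deg I)` the remaining graph is an Erdős–Rényi graph on `n` vertices with
the same edge probability; equivalently, the remaining graph is independent of
`(I, deg I)` and has the `G(n, p)` law. -/
theorem remove_uniform_vertex_law
    (n : ℕ) (p : ENNReal) (hp : p ≤ 1) :
    (ProbabilityTheory.IndepFun
        (fun ω : Fin (n + 1) × (EdgeIdx (n + 1) → Bool) => removeVertex ω.1 ω.2)
        (fun ω : Fin (n + 1) × (EdgeIdx (n + 1) → Bool) => (ω.1, degOf ω.2 ω.1))
        (((PMF.uniformOfFintype (Fin (n + 1))).toMeasure).prod (gnp (n + 1) p hp)))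
      ∧ Measure.map
          (fun ω : Fin (n + 1) × (EdgeIdx (n + 1) → Bool) => removeVertex ω.1 ω.2)
          (((PMF.uniformOfFintype (Fin (n + 1))).toMeasure).prod (gnp (n + 1) p hp))
        = gnp n p hp := by
  set u := (PMF.uniformOfFintype (Fin (n + 1))).toMeasure with hu
  set μ := u.prod (gnp (n + 1) p hp) with hμ
  set f := fun ω : Fin (n + 1) × (EdgeIdx (n + 1) → Bool) => removeVertex ω.1 ω.2 with hf
  set g := fun ω : Fin (n + 1) × (EdgeIdx (n + 1) → Bool) => (ω.1, degOf ω.2 ω.1) with hg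
  have hfm : Measurable f := measurable_of_countable f
  have hgm : Measurable g := measurable_of_countable g
  -- the law of the remaining graph
  have hmapf : Measure.map f μ = gnp n p hp := by
    refine Measure.ext_of_singleton fun η => ?_
    rw [Measure.map_apply hfm (measurableSet_singleton η),
      Measure.prod_apply (measurableSet_all _)]
    have hval : ∀ i : Fin (n + 1),
        gnp (n + 1) p hp (Prod.mk i ⁻¹' (f ⁻¹' {η})) = gnp n p hp {η} := by
      intro i
      have : Prod.mk i ⁻¹' (f ⁻¹' {η}) = {ω | removeVertex i ω = η} := rfl
      rw [this, K1 i η]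
    simp_rw [hval]
    rw [lintegral_const, measure_univ, mul_one]
  have hmapg : ∀ (j : Fin (n + 1)) (d : ℕ),
      Measure.map g μ {(j, d)} = u {j} * nu2 n p hp {χ | cnt χ = d} := by
    intro j d
    rw [Measure.map_apply hgm (measurableSet_singleton _)]
    have : g ⁻¹' {(j, d)} = {j} ×ˢ {ω | degOf ω j = d} := by
      ext ⟨i, ω⟩
      simp only [hg, Set.mem_preimage, Set.mem_singleton_iff, Prod.mk.injEq, Set.mem_prod,
        Set.mem_setOf_eq]
      constructor
      · rintro ⟨rfl, h2⟩; exact ⟨rfl, h2⟩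
      · rintro ⟨rfl, h2⟩; exact ⟨rfl, h2⟩
    rw [this, Measure.prod_prod, K2 j d]
  refine ⟨?_, hmapf⟩
  rw [ProbabilityTheory.indepFun_iff_map_prod_eq_prod_map_map hfm.aemeasurable hgm.aemeasurable]
  have : IsProbabilityMeasure (Measure.map g μ) := Measure.isProbabilityMeasure_map hgm.aemeasurable
  refine Measure.ext_of_singleton fun x => ?_
  obtain ⟨η, j, d⟩ := x
  have hpre : (fun ω => (f ω, g ω)) ⁻¹' {(η, (j, d))}
      = {j} ×ˢ {ω | removeVertex j ω = η ∧ degOf ω j = d} := by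
    ext ⟨i, ω⟩
    simp only [hf, hg, Set.mem_preimage, Set.mem_singleton_iff, Prod.mk.injEq, Set.mem_prod,
      Set.mem_setOf_eq]
    constructor
    · rintro ⟨h1, rfl, h3⟩; exact ⟨rfl, h1, h3⟩
    · rintro ⟨rfl, h1, h3⟩; exact ⟨h1, rfl, h3⟩
  rw [Measure.map_apply (hfm.prodMk hgm) (measurableSet_singleton _), hpre,
    Measure.prod_prod, K12 j η d]
  have hsing : ({(η, (j, d))} : Set ((EdgeIdx n → Bool) × (Fin (n + 1) × ℕ)))
      = {η} ×ˢ {(j, d)} := by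
    ext ⟨η', y⟩
    simp [Prod.ext_iff]
  rw [hsing, Measure.prod_prod, hmapf, hmapg j d]
  ring
end
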